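/- Let K ⊆ ℝⁿ be a centered convex body (center of mass at the origin) and 1 < R ≤ n. Then there exists a finite Borel measure μ on ℝⁿ with K ⊆ M(μ) ⊆ RK, μ(ℝⁿ) ≤ exp(1 + (n−1)/(R−1)), and ∫ ‖x‖_K dμ(x) ≤ R·exp(1 + (n−1)/(R−1)). In particular d*_R(K) ≤ exp(1+(n−1)/(R−1)) and D*_R(K) ≤ R·exp(1+(n−1)/(R−1)). -/

import Mathlib

open MeasureTheory Pointwise

noncomputable def metronoid {n : ℕ} (μ : Measure (EuclideanSpace ℝ (Fin n))) :
    Set (EuclideanSpace ℝ (Fin n)) :=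
  {y | ∃ f : EuclideanSpace ℝ (Fin n) → ℝ, Measurable f ∧
    (∀ x, f x ∈ Set.Icc (0:ℝ) 1) ∧ (∫ x, f x ∂μ) = 1 ∧ (∫ x, f x • x ∂μ) = y}

/-- `d*_R(K)`. -/
noncomputable def dStar {n : ℕ} (R : ℝ) (K : Set (EuclideanSpace ℝ (Fin n))) : ℝ :=
  sInf {c | ∃ μ : Measure (EuclideanSpace ℝ (Fin n)), IsFiniteMeasure μ ∧
    K ⊆ metronoid μ ∧ metronoid μ ⊆ R • K ∧ (μ Set.univ).toReal = c}

/-- `D*_R(K)`. -/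
noncomputable def DStar {n : ℕ} (R : ℝ) (K : Set (EuclideanSpace ℝ (Fin n))) : ℝ :=
  sInf {c | ∃ μ : Measure (EuclideanSpace ℝ (Fin n)), IsFiniteMeasure μ ∧
    K ⊆ metronoid μ ∧ metronoid μ ⊆ R • K ∧ (∫ x, gauge K x ∂μ) = c}

open scoped ENNReal NNReal

private lemma exp_aux {n : ℕ} {R : ℝ} (hR1 : 1 < R) (hRn : R ≤ n) :
    (R / (R - 1)) ^ n ≤ Real.exp (1 + ((n : ℝ) - 1) / (R - 1)) := by
  have hs0 : (0:ℝ) < R - 1 := by linarith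
  have hn1 : (1:ℝ) < n := lt_of_lt_of_le hR1 hRn
  have hn2 : (2:ℝ) ≤ n := by
    have h : 1 < n := by exact_mod_cast hn1
    have h2 : 2 ≤ n := h
    exact_mod_cast h2
  set u : ℝ := (n : ℝ) with hu
  have hu0 : (0:ℝ) < u := by linarith
  have hu1 : (0:ℝ) < u - 1 := by linarith
  set t : ℝ := 1 / (R - 1) with ht
  have ht0 : (0:ℝ) < t := by positivity
  have h1t : (0:ℝ) < 1 + t := by linarith
  have hRt : R / (R - 1) = 1 + t := by rw [ht]; field_simp; ring
  have ha : (0:ℝ) < (1 + t) * ((u - 1) / u) := by positivity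
  have hb : (0:ℝ) < u / (u - 1) := by positivity
  have key : u * Real.log (1 + t) ≤ 1 + (u - 1) * t := by
    have hsplit : Real.log (1 + t)
        = Real.log ((1 + t) * ((u - 1) / u)) + Real.log (u / (u - 1)) := by
      rw [← Real.log_mul (ne_of_gt ha) (ne_of_gt hb)]
      congr 1
      field_simp
    have hla := Real.log_le_sub_one_of_pos ha
    have hlb := Real.log_le_sub_one_of_pos hb
    have hbound : Real.log (1 + t) ≤ ((1 + t) * ((u - 1) / u) - 1) + (u / (u - 1) - 1) := by
      rw [hsplit]; linarith
    have h2 : u * Real.log (1 + t)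
        ≤ u * (((1 + t) * ((u - 1) / u) - 1) + (u / (u - 1) - 1)) :=
      mul_le_mul_of_nonneg_left hbound hu0.le
    have h3 : u * (((1 + t) * ((u - 1) / u) - 1) + (u / (u - 1) - 1))
        = (1 + t) * (u - 1) - 2 * u + u * (u / (u - 1)) := by
      field_simp
      ring
    have h4 : u * (u / (u - 1)) ≤ 2 * u - (u - 1) * 1 + (1 - u) + u := by
      rw [mul_div_assoc']
      rw [div_le_iff₀ hu1]
      nlinarith
    nlinarith [h2, h3, h4]
  have hpow : (1 + t) ^ n = Real.exp (u * Real.log (1 + t)) := by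
    rw [← Real.log_pow, Real.exp_log (pow_pos h1t n)]
  have hfin : 1 + (u - 1) * t = 1 + (u - 1) / (R - 1) := by
    rw [ht]; ring
  rw [hRt, hpow, ← hfin]
  exact Real.exp_le_exp.mpr key

theorem main_upper_bdd {n : ℕ} (K : Set (EuclideanSpace ℝ (Fin n)))
    (hKc : IsCompact K) (hKconv : Convex ℝ K) (hKint : (interior K).Nonempty)
    (hcent : ∫ x in K, x ∂(volume : Measure (EuclideanSpace ℝ (Fin n))) = 0)
    (R : ℝ) (hR1 : 1 < R) (hRn : R ≤ n) :
    (∃ μ : Measure (EuclideanSpace ℝ (Fin n)), IsFiniteMeasure μ ∧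
      K ⊆ metronoid μ ∧ metronoid μ ⊆ R • K ∧
      (μ Set.univ).toReal ≤ Real.exp (1 + (n - 1) / (R - 1)) ∧
      (∫ x, gauge K x ∂μ) ≤ R * Real.exp (1 + (n - 1) / (R - 1))) ∧
    dStar R K ≤ Real.exp (1 + (n - 1) / (R - 1)) ∧
    DStar R K ≤ R * Real.exp (1 + (n - 1) / (R - 1)) := by
  have hR0 : (0:ℝ) < R := lt_trans one_pos hR1
  have hs0 : (0:ℝ) < R - 1 := by linarith
  have hrank : Module.finrank ℝ (EuclideanSpace ℝ (Fin n)) = n := finrank_euclideanSpace_fin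
  set L : Set (EuclideanSpace ℝ (Fin n)) := R • K with hL
  have hLc : IsCompact L := by
    rw [hL, ← Set.image_smul]
    exact hKc.image (continuous_const_smul R)
  have hLmeas : MeasurableSet L := hLc.isClosed.measurableSet
  have hLconv : Convex ℝ L := hKconv.smul R
  have hKmeas : MeasurableSet K := hKc.isClosed.measurableSet
  have hvK0 : 0 < volume K := Measure.measure_pos_of_nonempty_interior _ hKint
  have hvKt : volume K ≠ ⊤ := hKc.measure_lt_top.ne
  set vK : ℝ := (volume K).toReal with hvk
  have hvK : 0 < vK := ENNReal.toReal_pos hvK0.ne' hvKt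
  set c : ℝ := (R / (R - 1)) ^ n with hc
  have hc0 : 0 < c := pow_pos (div_pos hR0 hs0) n
  set d : ℝ := c / (R ^ n * vK) with hd
  have hd0 : 0 < d := div_pos hc0 (by positivity)
  set μ : Measure (EuclideanSpace ℝ (Fin n)) := (ENNReal.ofReal d) • (volume.restrict L) with hμ
  have hvolL : volume L = ENNReal.ofReal (R ^ n) * volume K := by
    rw [hL, Measure.addHaar_smul, hrank, abs_of_pos (pow_pos hR0 n)]
  have hmassE : μ Set.univ = ENNReal.ofReal c := by
    rw [hμ, Measure.smul_apply, Measure.restrict_apply_univ, hvolL, smul_eq_mul,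
      ← ENNReal.ofReal_toReal hvKt, ← hvk, ← ENNReal.ofReal_mul (pow_nonneg hR0.le n),
      ← ENNReal.ofReal_mul hd0.le]
    congr 1
    rw [hd]
    field_simp
  have hmass : (μ Set.univ).toReal = c := by rw [hmassE, ENNReal.toReal_ofReal hc0.le]
  have hfin : IsFiniteMeasure μ := ⟨by rw [hmassE]; exact ENNReal.ofReal_lt_top⟩
  haveI := hfin
  have hone : d * ((R - 1) ^ n * vK) = 1 := by
    have hcc : c * (R - 1) ^ n = R ^ n := by
      rw [hc, div_pow]
      field_simp
    rw [hd, div_mul_eq_mul_div, div_eq_one_iff_eq (mul_pos (pow_pos hR0 n) hvK).ne']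
    linear_combination vK * hcc
  -- K subset of metronoid
  have hsubK : K ⊆ metronoid μ := by
    intro y hy
    set T : (EuclideanSpace ℝ (Fin n)) → (EuclideanSpace ℝ (Fin n)) := fun z => y + (R - 1) • z with hT
    have hTc : Continuous T := continuous_const.add (continuous_const_smul (R - 1))
    set A : Set (EuclideanSpace ℝ (Fin n)) := T '' K with hA
    have hAc : IsCompact A := hKc.image hTc
    have hAmeas : MeasurableSet A := hAc.isClosed.measurableSet
    have hAL : A ⊆ L := by
      rintro _ ⟨z, hz, rfl⟩
      refine Set.mem_smul_set.mpr ⟨R⁻¹ • y + (1 - R⁻¹) • z,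
        hKconv hy hz (by positivity) (by
          rw [sub_nonneg, inv_le_one_iff₀]
          right; exact hR1.le) (by ring), ?_⟩
      rw [smul_add, smul_smul, smul_smul, mul_inv_cancel₀ hR0.ne', one_smul]
      congr 1
      congr 1
      field_simp
    have hder : ∀ z ∈ K, HasFDerivWithinAt T ((R - 1) • ContinuousLinearMap.id ℝ (EuclideanSpace ℝ (Fin n))) K z :=
      fun z _ => (((hasFDerivAt_id z).const_smul (R - 1)).const_add y).hasFDerivWithinAt
    have hinj : Set.InjOn T K := by
      intro a _ b _ h
      have h2 : (R - 1) • a = (R - 1) • b := by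
        have := h
        simp only [hT, add_right_inj] at this
        exact this
      exact smul_right_injective (EuclideanSpace ℝ (Fin n)) hs0.ne' h2
    have hdet : |((R - 1) • ContinuousLinearMap.id ℝ (EuclideanSpace ℝ (Fin n))).det| = (R - 1) ^ n := by
      have : ((R - 1) • ContinuousLinearMap.id ℝ (EuclideanSpace ℝ (Fin n))).det
          = LinearMap.det ((R - 1) • (LinearMap.id : (EuclideanSpace ℝ (Fin n)) →ₗ[ℝ] (EuclideanSpace ℝ (Fin n)))) := rfl
      rw [this, LinearMap.det_smul, LinearMap.det_id, hrank, mul_one,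
        abs_of_pos (pow_pos hs0 n)]
    haveI : IsFiniteMeasure (volume.restrict K) :=
      ⟨by rw [Measure.restrict_apply_univ]; exact hKc.measure_lt_top⟩
    have himg1 : ∫ x in A, (1:ℝ) ∂volume = (R - 1) ^ n * vK := by
      rw [hA, integral_image_eq_integral_abs_det_fderiv_smul volume hKmeas hder hinj]
      simp only [hdet, smul_eq_mul, mul_one]
      rw [setIntegral_const, smul_eq_mul, mul_comm]; rfl
    have himg2 : ∫ x in A, x ∂volume = ((R - 1) ^ n * vK) • y := by
      rw [hA, integral_image_eq_integral_abs_det_fderiv_smul volume hKmeas hder hinj]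
      simp only [hdet, hT]
      rw [integral_smul]
      have hci : IntegrableOn (fun a : (EuclideanSpace ℝ (Fin n)) => (R - 1) • a) K volume := by
        apply ContinuousOn.integrableOn_compact hKc
        fun_prop
      rw [integral_add (integrable_const y) hci]
      rw [integral_smul, hcent, smul_zero, add_zero, setIntegral_const,
        smul_smul]; rfl
    refine ⟨A.indicator (fun _ => (1:ℝ)), measurable_const.indicator hAmeas, ?_, ?_, ?_⟩
    · intro x
      by_cases hx : x ∈ A <;> simp [Set.indicator_apply, hx]
    · rw [hμ, integral_smul_measure, ENNReal.toReal_ofReal hd0.le,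
        integral_indicator hAmeas, Measure.restrict_restrict hAmeas,
        Set.inter_eq_self_of_subset_left hAL, himg1, smul_eq_mul, hone]
    · have hfun : (fun x => A.indicator (fun _ => (1:ℝ)) x • x)
          = A.indicator (fun x => x) := by
        funext x
        by_cases hx : x ∈ A <;> simp [Set.indicator_apply, hx]
      rw [hfun, hμ, integral_smul_measure, ENNReal.toReal_ofReal hd0.le,
        integral_indicator hAmeas, Measure.restrict_restrict hAmeas,
        Set.inter_eq_self_of_subset_left hAL, himg2, smul_smul, hone, one_smul]
  have haeL : ∀ᵐ x ∂μ, x ∈ L := by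
    rw [hμ]
    exact Measure.ae_smul_measure (ae_restrict_mem hLmeas) _
  have hsubM : metronoid μ ⊆ R • K := by
    rintro y ⟨f, hfm, hf01, hfint, hfbar⟩
    have hfi : Integrable f μ := by
      refine (integrable_const (1:ℝ)).mono' hfm.aestronglyMeasurable
        (Filter.Eventually.of_forall fun x => ?_)
      rw [Real.norm_eq_abs, abs_le]
      exact ⟨by linarith [(hf01 x).1], (hf01 x).2⟩
    set ν : Measure (EuclideanSpace ℝ (Fin n)) := μ.withDensity (fun x => ((f x).toNNReal : ℝ≥0∞)) with hν
    have hprob : IsProbabilityMeasure ν := by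
      constructor
      rw [hν, withDensity_apply _ MeasurableSet.univ, Measure.restrict_univ]
      have : ∫⁻ x, ((f x).toNNReal : ℝ≥0∞) ∂μ = ENNReal.ofReal (∫ x, f x ∂μ) :=
        (ofReal_integral_eq_lintegral_ofReal hfi
          (Filter.Eventually.of_forall fun x => (hf01 x).1)).symm
      rw [this, hfint, ENNReal.ofReal_one]
    haveI := hprob
    have hx_ae : ∀ᵐ x ∂ν, x ∈ L :=
      (withDensity_absolutelyContinuous μ _).ae_le haeL
    obtain ⟨C, hC⟩ := hLc.isBounded.exists_norm_le
    have hi : Integrable (fun x : (EuclideanSpace ℝ (Fin n)) => x) ν := by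
      refine (integrable_const C).mono' aestronglyMeasurable_id ?_
      filter_upwards [hx_ae] with x hx using hC x hx
    have hbar : ∫ x, x ∂ν = y := by
      rw [hν, integral_withDensity_eq_integral_smul hfm.real_toNNReal (fun x : (EuclideanSpace ℝ (Fin n)) => x)]
      rw [← hfbar]
      congr 1
      funext x
      rw [NNReal.smul_def, Real.coe_toNNReal _ (hf01 x).1]
    rw [← hL, ← hbar]
    exact hLconv.integral_mem hLc.isClosed hx_ae hi
  have hgauge : ∫ x, gauge K x ∂μ ≤ R * c := by
    have hb : ∀ᵐ x ∂μ, gauge K x ≤ R := by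
      filter_upwards [haeL] with x hx
      obtain ⟨z, hz, rfl⟩ := Set.mem_smul_set.mp hx
      rw [gauge_smul_of_nonneg hR0.le, smul_eq_mul]
      calc R * gauge K z ≤ R * 1 :=
            mul_le_mul_of_nonneg_left (gauge_le_one_of_mem hz) hR0.le
        _ = R := mul_one R
    calc ∫ x, gauge K x ∂μ ≤ ∫ _, R ∂μ :=
          integral_mono_of_nonneg (Filter.Eventually.of_forall fun x => gauge_nonneg x)
            (integrable_const R) hb
      _ = R * c := by rw [integral_const]; show (μ Set.univ).toReal • R = R * c; rw [hmass, smul_eq_mul, mul_comm]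
  have hexp : c ≤ Real.exp (1 + ((n : ℝ) - 1) / (R - 1)) := hc ▸ exp_aux hR1 hRn
  have hmassb : (μ Set.univ).toReal ≤ Real.exp (1 + ((n : ℝ) - 1) / (R - 1)) := by
    rw [hmass]; exact hexp
  have hgaugeb : ∫ x, gauge K x ∂μ ≤ R * Real.exp (1 + ((n : ℝ) - 1) / (R - 1)) :=
    hgauge.trans (mul_le_mul_of_nonneg_left hexp hR0.le)
  refine ⟨⟨μ, hfin, hsubK, hsubM, hmassb, hgaugeb⟩, ?_, ?_⟩
  · refine le_trans (csInf_le ?_ ⟨μ, hfin, hsubK, hsubM, rfl⟩) hmassb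
    refine ⟨0, ?_⟩
    rintro b ⟨μ', _, _, _, rfl⟩
    exact ENNReal.toReal_nonneg
  · refine le_trans (csInf_le ?_ ⟨μ, hfin, hsubK, hsubM, rfl⟩) hgaugeb
    refine ⟨0, ?_⟩
    rintro b ⟨μ', _, _, _, rfl⟩
    exact integral_nonneg fun x => gauge_nonneg x
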